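/- (Lemma 1(ii).) Let Φ₁, Φ₂ be unit vectors in ℂᵈ, let ε ∈ [0, 1], and let (Π₀, Π₁, Π₂) be a three-outcome POVM (positive semidefinite d×d matrices with Π₀ + Π₁ + Π₂ = I) such that ⟨Φ₂, Π₁Φ₂⟩ = 0, ⟨Φ₁, Π₂Φ₁⟩ = 0, ⟨Φ₁, Π₀Φ₁⟩ ≤ ε and ⟨Φ₂, Π₀Φ₂⟩ ≤ ε. Then |⟨Φ₁, Φ₂⟩| ≤ ε. -/

import Mathlib

open Matrix ComplexOrder

lemma EuclideanSpace.inner_piLp_equiv_symm {d : ℕ} (x y : Fin d → ℂ) :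
    inner ℂ ((WithLp.equiv 2 (Fin d → ℂ)).symm x) ((WithLp.equiv 2 (Fin d → ℂ)).symm y) =
      star x ⬝ᵥ y :=
  (EuclideanSpace.inner_toLp_toLp x y).trans (dotProduct_comm _ _)

lemma cs_aux {d : ℕ} (u v : Fin d → ℂ) :
    ‖star u ⬝ᵥ v‖ ≤
      Real.sqrt (Complex.re (star u ⬝ᵥ u)) * Real.sqrt (Complex.re (star v ⬝ᵥ v)) := by
  have h := norm_inner_le_norm (𝕜 := ℂ) ((WithLp.equiv 2 (Fin d → ℂ)).symm u)
      ((WithLp.equiv 2 (Fin d → ℂ)).symm v)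
  rw [EuclideanSpace.inner_piLp_equiv_symm] at h
  have hnu : ‖(WithLp.equiv 2 (Fin d → ℂ)).symm u‖ = Real.sqrt (Complex.re (star u ⬝ᵥ u)) := by
    rw [← Real.sqrt_sq (norm_nonneg _)]
    congr 1
    rw [← @inner_self_eq_norm_sq ℂ, EuclideanSpace.inner_piLp_equiv_symm]
    rfl
  have hnv : ‖(WithLp.equiv 2 (Fin d → ℂ)).symm v‖ = Real.sqrt (Complex.re (star v ⬝ᵥ v)) := by
    rw [← Real.sqrt_sq (norm_nonneg _)]
    congr 1
    rw [← @inner_self_eq_norm_sq ℂ, EuclideanSpace.inner_piLp_equiv_symm]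
    rfl
  rw [hnu, hnv] at h
  exact h

/-- Lemma 1(ii): one-sided-error (unambiguous) discrimination by a three-outcome POVM
forces the overlap of the two states to be at most `ε`. -/
theorem overlap_le_of_one_sided_error_povm (d : ℕ) (Φ₁ Φ₂ : Fin d → ℂ)
    (hΦ₁ : star Φ₁ ⬝ᵥ Φ₁ = 1) (hΦ₂ : star Φ₂ ⬝ᵥ Φ₂ = 1)
    (ε : ℝ) (hε : ε ∈ Set.Icc (0 : ℝ) 1)
    (P₀ P₁ P₂ : Matrix (Fin d) (Fin d) ℂ)
    (hP₀ : P₀.PosSemidef) (hP₁ : P₁.PosSemidef) (hP₂ : P₂.PosSemidef)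
    (hsum : P₀ + P₁ + P₂ = 1)
    (he₁ : star Φ₂ ⬝ᵥ (P₁ *ᵥ Φ₂) = 0) (he₂ : star Φ₁ ⬝ᵥ (P₂ *ᵥ Φ₁) = 0)
    (hi₁ : star Φ₁ ⬝ᵥ (P₀ *ᵥ Φ₁) ≤ ((ε : ℝ) : ℂ))
    (hi₂ : star Φ₂ ⬝ᵥ (P₀ *ᵥ Φ₂) ≤ ((ε : ℝ) : ℂ)) :
    ‖star Φ₁ ⬝ᵥ Φ₂‖ ≤ ε := by
  obtain ⟨hε0, hε1⟩ := hε
  have h1 : P₁ *ᵥ Φ₂ = 0 := (hP₁.dotProduct_mulVec_zero_iff Φ₂).mp he₁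
  have h2 : P₂ *ᵥ Φ₁ = 0 := (hP₂.dotProduct_mulVec_zero_iff Φ₁).mp he₂
  -- ⟨Φ₁, P₂ Φ₂⟩ = 0 using hermiticity
  have h3 : star Φ₁ ⬝ᵥ (P₂ *ᵥ Φ₂) = 0 := by
    rw [dotProduct_mulVec]
    conv_lhs => rw [← hP₂.isHermitian.eq, ← star_mulVec, h2]
    simp
  have key : star Φ₁ ⬝ᵥ Φ₂ = star Φ₁ ⬝ᵥ (P₀ *ᵥ Φ₂) := by
    have : Φ₂ = (P₀ + P₁ + P₂) *ᵥ Φ₂ := by rw [hsum, one_mulVec]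
    conv_lhs => rw [this]
    rw [add_mulVec, add_mulVec, h1, add_zero, dotProduct_add, h3, add_zero]
  -- square root of P₀
  open MatrixOrder in set B := CFC.sqrt P₀ with hB
  open MatrixOrder in have hBB : B * B = P₀ := CFC.sqrt_mul_sqrt_self P₀ (Matrix.nonneg_iff_posSemidef.mpr hP₀)
  open MatrixOrder in have hBH : Bᴴ = B := (Matrix.nonneg_iff_posSemidef.mp (CFC.sqrt_nonneg P₀)).isHermitian.eq
  have factor : ∀ x y : Fin d → ℂ,
      star x ⬝ᵥ (P₀ *ᵥ y) = star (B *ᵥ x) ⬝ᵥ (B *ᵥ y) := by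
    intro x y
    rw [star_mulVec, hBH, ← dotProduct_mulVec, mulVec_mulVec, hBB]
  have hre : ∀ x : Fin d → ℂ, star x ⬝ᵥ (P₀ *ᵥ x) ≤ ((ε : ℝ) : ℂ) →
      Complex.re (star (B *ᵥ x) ⬝ᵥ (B *ᵥ x)) ≤ ε := by
    intro x hx
    rw [← factor]
    rw [Complex.le_def] at hx
    exact hx.1
  have hcs := cs_aux (B *ᵥ Φ₁) (B *ᵥ Φ₂)
  rw [key, factor]
  refine hcs.trans ?_
  calc Real.sqrt (Complex.re (star (B *ᵥ Φ₁) ⬝ᵥ (B *ᵥ Φ₁))) *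
        Real.sqrt (Complex.re (star (B *ᵥ Φ₂) ⬝ᵥ (B *ᵥ Φ₂)))
      ≤ Real.sqrt ε * Real.sqrt ε := by
        gcongr <;> [exact hre Φ₁ hi₁; exact hre Φ₂ hi₂]
    _ = ε := Real.mul_self_sqrt hε0
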